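/- If X(t) solves dX/dt = −Σᵢ ρᵢ(X)(AᵢX + XAᵢ) with ρᵢ(X) = tr(AᵢX) − yᵢ, Aᵢ symmetric, and X(0) is symmetric positive semidefinite of rank r, then X(t) is symmetric positive semidefinite of rank at most r for all t ≥ 0 in the interval of existence. -/

import Mathlib

open Matrix

section Auxiliary

open Set Topology Filter

attribute [local instance] Matrix.linftyOpNormedRing Matrix.linftyOpNormedAlgebra

local notation "M " n => Matrix (Fin n) (Fin n) ℝ

private lemma entry_hasDerivAt' {n : ℕ} {f : ℝ → M n} {D : M n} {t : ℝ}
    (h : HasDerivAt f D t) (a b : Fin n) :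
    HasDerivAt (fun s => f s a b) (D a b) t := by
  let L : (M n) →ₗ[ℝ] ℝ :=
    { toFun := fun m => m a b
      map_add' := fun _ _ => rfl
      map_smul' := fun _ _ => rfl }
  exact L.toContinuousLinearMap.hasFDerivAt.comp_hasDerivAt t h

private lemma matrix_hasDerivAt' {n : ℕ} {f : ℝ → M n} {D : M n} {t : ℝ}
    (h : ∀ a b, HasDerivAt (fun s => f s a b) (D a b) t) : HasDerivAt f D t := by
  have key : HasDerivAt (fun s => ∑ a : Fin n, ∑ b : Fin n, single a b (f s a b))
      (∑ a : Fin n, ∑ b : Fin n, single a b (D a b)) t := by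
    refine HasDerivAt.fun_sum fun a _ => HasDerivAt.fun_sum fun b _ => ?_
    have : ∀ (c : ℝ), single a b c = c • single a b (1:ℝ) := by
      intro c; rw [smul_single, smul_eq_mul, mul_one]
    rw [this (D a b)]
    exact ((h a b).smul_const (single a b (1:ℝ))).congr_of_eventuallyEq
      (by filter_upwards with s; rw [this])
  have e1 : (fun s : ℝ => f s)
      = fun s => ∑ a : Fin n, ∑ b : Fin n, single a b (f s a b) := by
    funext s; exact matrix_eq_sum_single (f s)
  have e2 : D = ∑ a : Fin n, ∑ b : Fin n, single a b (D a b) :=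
    matrix_eq_sum_single D
  rw [show f = fun s => f s from rfl, e1, e2]
  exact key

private lemma exists_local_sol' {n : ℕ} {B : ℝ → M n} (hB : Continuous B) (t₀ : ℝ)
    (x₀ : M n) :
    ∃ ε > (0:ℝ), ∃ P : ℝ → M n, P t₀ = x₀ ∧
      ∀ t ∈ Ioo (t₀ - ε) (t₀ + ε), HasDerivAt P (B t * P t) t := by
  obtain ⟨K, hK⟩ := (isCompact_Icc (a := t₀ - 1) (b := t₀ + 1)).exists_bound_of_continuousOn
    hB.continuousOn
  set K' : ℝ := max K 1 with hK'def
  have hK'1 : (1:ℝ) ≤ K' := le_max_right _ _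
  have hK'0 : (0:ℝ) < K' := lt_of_lt_of_le one_pos hK'1
  set C : ℝ := K' * (‖x₀‖ + 1) with hCdef
  have hC1 : (1:ℝ) ≤ C := by
    have : (1:ℝ) ≤ ‖x₀‖ + 1 := by have := norm_nonneg x₀; linarith
    calc (1:ℝ) = 1 * 1 := (one_mul 1).symm
    _ ≤ K' * (‖x₀‖ + 1) := by apply mul_le_mul hK'1 this zero_le_one hK'0.le
  have hC0 : (0:ℝ) < C := lt_of_lt_of_le one_pos hC1
  set ε : ℝ := min 1 (1 / C) with hεdef
  have hε0 : (0:ℝ) < ε := lt_min one_pos (by positivity)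
  have hε1 : ε ≤ 1 := min_le_left _ _
  have hsub : Icc (t₀ - ε) (t₀ + ε) ⊆ Icc (t₀ - 1) (t₀ + 1) :=
    Icc_subset_Icc (by linarith) (by linarith)
  have hBbd : ∀ t ∈ Icc (t₀ - ε) (t₀ + ε), ‖B t‖ ≤ K' :=
    fun t ht => le_trans (hK t (hsub ht)) (le_max_left _ _)
  have ht₀I : t₀ ∈ Icc (t₀ - ε) (t₀ + ε) := by constructor <;> linarith
  have hpl : IsPicardLindelof (fun t x => B t * x) (⟨t₀, ht₀I⟩ : Icc (t₀ - ε) (t₀ + ε)) x₀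
      1 0 ⟨C, hC0.le⟩ ⟨K', hK'0.le⟩ :=
    { lipschitzOnWith := by
        intro t ht
        apply LipschitzOnWith.of_dist_le_mul
        intro x _ y _
        rw [dist_eq_norm, dist_eq_norm, ← mul_sub]
        calc ‖B t * (x - y)‖ ≤ ‖B t‖ * ‖x - y‖ := norm_mul_le _ _
        _ ≤ K' * ‖x - y‖ := by
            apply mul_le_mul_of_nonneg_right (hBbd t ht) (norm_nonneg _)
      continuousOn := fun x _ => (hB.mul continuous_const).continuousOn
      norm_le := by
        intro t ht x hx
        have hxn : ‖x‖ ≤ ‖x₀‖ + 1 := by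
          have : ‖x - x₀‖ ≤ 1 := by simpa using mem_closedBall_iff_norm.mp hx
          calc ‖x‖ = ‖x₀ + (x - x₀)‖ := by rw [add_sub_cancel]
          _ ≤ ‖x₀‖ + ‖x - x₀‖ := norm_add_le _ _
          _ ≤ ‖x₀‖ + 1 := by linarith
        calc ‖B t * x‖ ≤ ‖B t‖ * ‖x‖ := norm_mul_le _ _
        _ ≤ K' * (‖x₀‖ + 1) := mul_le_mul (hBbd t ht) hxn (norm_nonneg _) hK'0.le
      mul_max_le := by
        show C * max (t₀ + ε - t₀) (t₀ - (t₀ - ε)) ≤ ((1 : NNReal) : ℝ) - ((0 : NNReal) : ℝ)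
        rw [NNReal.coe_one, NNReal.coe_zero, sub_zero]
        have : max (t₀ + ε - t₀) (t₀ - (t₀ - ε)) = ε := by
          rw [show t₀ + ε - t₀ = ε by ring, show t₀ - (t₀ - ε) = ε by ring, max_self]
        rw [this]
        have hεC : ε ≤ 1 / C := min_le_right _ _
        calc C * ε ≤ C * (1 / C) := mul_le_mul_of_nonneg_left hεC hC0.le
        _ = 1 := by field_simp }
  obtain ⟨P, hP0, hP⟩ := hpl.exists_eq_forall_mem_Icc_hasDerivWithinAt₀
  exact ⟨ε, hε0, P, hP0, fun t ht =>
    (hP t (Ioo_subset_Icc_self ht)).hasDerivAt (Icc_mem_nhds ht.1 ht.2)⟩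

private lemma local_congruence' {n : ℕ} {X B : ℝ → M n} (hB : Continuous B)
    (hBsymm : ∀ t, (B t)ᵀ = B t)
    (hX' : ∀ t, HasDerivAt X (B t * X t + X t * B t) t) (t₀ : ℝ) :
    ∀ᶠ t in 𝓝 t₀, ∃ C : M n, IsUnit C.det ∧ X t₀ = Cᵀ * X t * C := by
  obtain ⟨ε, hε, P, hP0, hP⟩ := exists_local_sol' hB.neg t₀ (1 : M n)
  set g : ℝ → M n := fun s => (P s)ᵀ * X s * P s with hgdef
  have hg : ∀ t ∈ Ioo (t₀ - ε) (t₀ + ε), HasDerivAt g 0 t := by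
    intro t ht
    have hPt := hP t ht
    have hPT : HasDerivAt (fun s => (P s)ᵀ) ((-B t * P t)ᵀ) t := by
      apply matrix_hasDerivAt'
      intro a b
      exact entry_hasDerivAt' hPt b a
    have h2 := (hPT.mul (hX' t)).mul hPt
    have : ((-B t * P t)ᵀ * X t + (P t)ᵀ * (B t * X t + X t * B t)) * P t
        + (P t)ᵀ * X t * (-B t * P t) = 0 := by
      rw [transpose_mul, transpose_neg, hBsymm]
      noncomm_ring
    rw [← this]
    exact h2
  have hgc : ∀ t ∈ Ioo (t₀ - ε) (t₀ + ε), g t = g t₀ := by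
    intro t ht
    rcases le_total t₀ t with h | h
    · have := constant_of_has_deriv_right_zero (f := g) (a := t₀) (b := t)
        (fun s hs => ((hg s ⟨by cases hs; linarith [ht.1], by cases hs; linarith [ht.2]⟩
          ).continuousAt).continuousWithinAt)
        (fun s hs => ((hg s ⟨by cases hs; linarith [ht.1], by cases hs; linarith [ht.2]⟩
          ).hasDerivWithinAt))
      exact this t (right_mem_Icc.mpr h)
    · have := constant_of_has_deriv_right_zero (f := g) (a := t) (b := t₀)
        (fun s hs => ((hg s ⟨by cases hs; linarith [ht.1], by cases hs; linarith [ht.2]⟩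
          ).continuousAt).continuousWithinAt)
        (fun s hs => ((hg s ⟨by cases hs; linarith [ht.1], by cases hs; linarith [ht.2]⟩
          ).hasDerivWithinAt))
      exact (this t₀ (right_mem_Icc.mpr h)).symm
  have hgt₀ : g t₀ = X t₀ := by rw [hgdef]; simp [hP0]
  have ht₀mem : t₀ ∈ Ioo (t₀ - ε) (t₀ + ε) := by constructor <;> linarith
  have hdetne : ∀ᶠ t in 𝓝 t₀, (P t).det ≠ 0 := by
    have hPc : ContinuousAt P t₀ := (hP t₀ ht₀mem).continuousAt
    have : ContinuousAt (fun t => (P t).det) t₀ :=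
      (continuous_id.matrix_det (R := ℝ) (n := Fin n)).continuousAt.comp hPc
    apply this.eventually_ne
    rw [hP0, det_one]; exact one_ne_zero
  filter_upwards [hdetne, Ioo_mem_nhds ht₀mem.1 ht₀mem.2] with t hdet htI
  refine ⟨P t, isUnit_iff_ne_zero.mpr hdet, ?_⟩
  rw [← hgt₀, ← hgc t htI]

private lemma psd_congr' {n : ℕ} {N : M n} (h : N.PosSemidef) (C : M n) :
    (Cᵀ * N * C).PosSemidef := by
  have := h.conjTranspose_mul_mul_same (B := C)
  rwa [conjTranspose_eq_transpose_of_trivial] at this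

end Auxiliary

attribute [local instance] Matrix.linftyOpNormedRing Matrix.linftyOpNormedAlgebra

/-- The `X`-flow preserves positive semidefiniteness and does not increase rank:
if `X(0)` is symmetric psd of rank `r`, then for all `t ≥ 0`, `X(t)` is psd of rank at most
`r`. -/
theorem stmt3 {n q : ℕ} (A : Fin q → Matrix (Fin n) (Fin n) ℝ)
    (hA : ∀ i, (A i).IsSymm) (y : Fin q → ℝ) (r : ℕ)
    (X : ℝ → Matrix (Fin n) (Fin n) ℝ)
    (hX : ∀ t : ℝ, ∀ a b : Fin n,
      HasDerivAt (fun s => X s a b)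
        ((-(∑ i, (((A i) * X t).trace - y i) •
          ((A i) * X t + X t * (A i)))) a b) t)
    (hX0 : (X 0).PosSemidef) (hrank : (X 0).rank = r) :
    ∀ t : ℝ, 0 ≤ t → (X t).PosSemidef ∧ (X t).rank ≤ r := by
  classical
  open Set Topology Filter in
  -- matrix-valued derivative
  have hXmat : ∀ t, HasDerivAt X
      (-(∑ i, (((A i) * X t).trace - y i) • ((A i) * X t + X t * (A i)))) t :=
    fun t => matrix_hasDerivAt' (hX t)
  have hXcont : Continuous X := continuous_iff_continuousAt.mpr fun t => (hXmat t).continuousAt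
  set B : ℝ → Matrix (Fin n) (Fin n) ℝ :=
    fun t => -(∑ i, (((A i) * X t).trace - y i) • A i) with hBdef
  have hBcont : Continuous B := by
    apply Continuous.neg
    apply continuous_finset_sum
    intro i _
    exact (((continuous_const.matrix_mul hXcont).matrix_trace).sub continuous_const).smul
      continuous_const
  have hBsymm : ∀ t, (B t)ᵀ = B t := by
    intro t
    rw [hBdef]
    simp only [transpose_neg, transpose_sum, transpose_smul]
    congr 1
    refine Finset.sum_congr rfl fun i _ => ?_
    rw [(hA i).eq]
  have hX' : ∀ t, HasDerivAt X (B t * X t + X t * B t) t := by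
    intro t
    have : -(∑ i, (((A i) * X t).trace - y i) • ((A i) * X t + X t * (A i)))
        = B t * X t + X t * B t := by
      rw [hBdef]
      simp only [neg_mul, mul_neg, Finset.sum_mul, Finset.mul_sum, smul_mul_assoc,
        mul_smul_comm, smul_add, Finset.sum_add_distrib, neg_add]
    rw [← this]
    exact hXmat t
  -- the set where the invariant holds is clopen
  set S : Set ℝ := {t | (X t).PosSemidef ∧ (X t).rank = r} with hSdef
  have key : ∀ t₀ : ℝ, ∀ᶠ t in 𝓝 t₀,
      (((X t).PosSemidef ∧ (X t).rank = r) ↔ ((X t₀).PosSemidef ∧ (X t₀).rank = r)) := by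
    intro t₀
    filter_upwards [local_congruence' hBcont hBsymm hX' t₀] with t hC
    obtain ⟨C, hCu, hcong⟩ := hC
    have hback : X t = (C⁻¹)ᵀ * X t₀ * C⁻¹ := by
      rw [hcong]
      rw [show (C⁻¹)ᵀ * (Cᵀ * X t * C) * C⁻¹
          = (C * C⁻¹)ᵀ * X t * (C * C⁻¹) by rw [transpose_mul]; noncomm_ring,
        mul_nonsing_inv _ hCu, transpose_one, one_mul, mul_one]
    have hrk : (X t₀).rank = (X t).rank := by
      rw [hcong, rank_mul_eq_left_of_isUnit_det C (Cᵀ * X t) hCu,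
        rank_mul_eq_right_of_isUnit_det Cᵀ (X t) (by rwa [det_transpose])]
    constructor
    · rintro ⟨hpsd, hr⟩
      exact ⟨hcong ▸ psd_congr' hpsd C, by rw [hrk]; exact hr⟩
    · rintro ⟨hpsd, hr⟩
      exact ⟨hback ▸ psd_congr' hpsd C⁻¹, by rw [← hrk]; exact hr⟩
  have hSopen : IsOpen S := by
    rw [isOpen_iff_mem_nhds]
    intro t₀ ht₀
    filter_upwards [key t₀] with t ht
    exact ht.mpr ht₀
  have hScopen : IsOpen Sᶜ := by
    rw [isOpen_iff_mem_nhds]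
    intro t₀ ht₀
    filter_upwards [key t₀] with t ht
    exact fun h => ht₀ (ht.mp h)
  have hSclopen : IsClopen S := ⟨isOpen_compl_iff.mp hScopen, hSopen⟩
  have hSuniv : S = univ :=
    hSclopen.eq_univ ⟨0, ⟨hX0, hrank⟩⟩
  intro t _
  have : t ∈ S := hSuniv ▸ mem_univ t
  exact ⟨this.1, le_of_eq this.2⟩
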